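/- Let n ≥ 4, let V be an n-dimensional real vector space with a nondegenerate symmetric bilinear form h, let 𝒮 be an h-self-adjoint endomorphism of V which is not a scalar multiple of the identity, set S(X,Y) = h(X,𝒮Y) and R* = (1/2) S∧S. Then Weyl(R*) = 0 if and only if there exists ρ ∈ ℝ with rank(S − ρ·h) = 1 (i.e., the hypersurface is affine quasi-umbilical at the point). -/

import Mathlib

namespace OVAff

variable {V : Type*} [AddCommGroup V] [Module ℝ V]

/-- Kulkarni–Nomizu product of two (0,2)-tensors. -/
noncomputable def KN (E F : V → V → ℝ) : V → V → V → V → ℝ := fun X₁ X₂ X₃ X₄ =>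
  E X₁ X₄ * F X₂ X₃ + E X₂ X₃ * F X₁ X₄ - E X₁ X₃ * F X₂ X₄ - E X₂ X₄ * F X₁ X₃

/-- Kulkarni–Nomizu product of a (0,2)-tensor with a (0,4)-tensor. -/
noncomputable def KN4 (E : V → V → ℝ) (T : V → V → V → V → ℝ) :
    V → V → V → V → V → V → ℝ := fun X₁ X₂ X₃ X₄ Y₁ Y₂ =>
  E X₁ X₄ * T X₂ X₃ Y₁ Y₂ + E X₂ X₃ * T X₁ X₄ Y₁ Y₂
    - E X₁ X₃ * T X₂ X₄ Y₁ Y₂ - E X₂ X₄ * T X₁ X₃ Y₁ Y₂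

/-- (X ∧_A Y) Z = A(Y,Z) X − A(X,Z) Y. -/
noncomputable def wedgeVec (A : V → V → ℝ) (X Y Z : V) : V := A Y Z • X - A X Z • Y

/-- Tachibana operator Q(A,T) on a (0,2)-tensor T. -/
noncomputable def Q2 (A T : V → V → ℝ) : V → V → V → V → ℝ :=
  fun X₁ X₂ X Y => -(T (wedgeVec A X Y X₁) X₂ + T X₁ (wedgeVec A X Y X₂))

/-- Tachibana operator Q(A,T) on a (0,4)-tensor T. -/
noncomputable def Q4 (A : V → V → ℝ) (T : V → V → V → V → ℝ) :
    V → V → V → V → V → V → ℝ := fun X₁ X₂ X₃ X₄ X Y =>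
  -(T (wedgeVec A X Y X₁) X₂ X₃ X₄ + T X₁ (wedgeVec A X Y X₂) X₃ X₄
    + T X₁ X₂ (wedgeVec A X Y X₃) X₄ + T X₁ X₂ X₃ (wedgeVec A X Y X₄))

/-- The derivation B·T of a curvature operator family ℬ (with h(ℬ(X,Y)Z,W)=B(X,Y,Z,W))
acting on a (0,2)-tensor T. -/
noncomputable def dot2 (ℬ : V → V → V → V) (T : V → V → ℝ) : V → V → V → V → ℝ :=
  fun X₁ X₂ X Y => -(T (ℬ X Y X₁) X₂ + T X₁ (ℬ X Y X₂))

/-- The derivation B·T acting on a (0,4)-tensor T. -/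
noncomputable def dot4 (ℬ : V → V → V → V) (T : V → V → V → V → ℝ) :
    V → V → V → V → V → V → ℝ := fun X₁ X₂ X₃ X₄ X Y =>
  -(T (ℬ X Y X₁) X₂ X₃ X₄ + T X₁ (ℬ X Y X₂) X₃ X₄
    + T X₁ X₂ (ℬ X Y X₃) X₄ + T X₁ X₂ X₃ (ℬ X Y X₄))

/-- Ricci contraction of a (0,4)-tensor with respect to an h-orthonormal basis `e`
with signs `ε`. -/
noncomputable def ricci {n : ℕ} (ε : Fin n → ℝ) (e : Fin n → V)
    (B : V → V → V → V → ℝ) : V → V → ℝ :=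
  fun X Y => ∑ j, ε j * B (e j) X Y (e j)

/-- Scalar curvature of a (0,4)-tensor. -/
noncomputable def scal {n : ℕ} (ε : Fin n → ℝ) (e : Fin n → V)
    (B : V → V → V → V → ℝ) : ℝ :=
  ∑ j, ε j * ricci ε e B (e j) (e j)

/-- Weyl tensor of a (0,4)-tensor with respect to the metric h. -/
noncomputable def weyl {n : ℕ} (h : V → V → ℝ) (ε : Fin n → ℝ) (e : Fin n → V)
    (B : V → V → V → V → ℝ) : V → V → V → V → ℝ := fun X₁ X₂ X₃ X₄ =>
  B X₁ X₂ X₃ X₄ - (1 / ((n : ℝ) - 2)) * KN h (ricci ε e B) X₁ X₂ X₃ X₄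
    + (scal ε e B / (2 * ((n : ℝ) - 2) * ((n : ℝ) - 1))) * KN h h X₁ X₂ X₃ X₄


section Aux

variable {n : ℕ} (h : LinearMap.BilinForm ℝ V) (e : Module.Basis (Fin n) ℝ V) (ε : Fin n → ℝ)

lemma aux_exists_dual (hnd : ∀ X : V, (∀ Y, h X Y = 0) → X = 0)
    {k : ℕ} (x : Fin k → V)
    (hind : ∀ c : Fin k → ℝ, (∑ i, c i • x i) = 0 → ∀ i, c i = 0)
    (t : Fin k → ℝ) : ∃ z, ∀ i, h (x i) z = t i := by
  let Φ : V →ₗ[ℝ] (Fin k → ℝ) := LinearMap.pi (fun i => h (x i))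
  have hmem : t ∈ LinearMap.range Φ := by
    by_contra ht
    obtain ⟨f, hf0, hfb⟩ := Submodule.exists_dual_map_eq_bot_of_notMem (p := LinearMap.range Φ)
      ht inferInstance
    set c : Fin k → ℝ := fun i => f (Pi.single i 1) with hc
    have hfw : ∀ w : Fin k → ℝ, f w = ∑ i, w i * c i := by
      intro w
      conv_lhs => rw [pi_eq_sum_univ w, map_sum]
      refine Finset.sum_congr rfl fun i _ => ?_
      have hps : (fun j => if i = j then (1:ℝ) else 0) = Pi.single i 1 := by
        funext j; simp [Pi.single_apply, eq_comm]
      rw [map_smul, smul_eq_mul, hps]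
    have hker : ∀ z, f (Φ z) = 0 := by
      intro z
      have : f (Φ z) ∈ Submodule.map f (LinearMap.range Φ) :=
        Submodule.mem_map_of_mem ⟨z, rfl⟩
      rw [hfb] at this
      simpa using this
    have hcomb : ∀ z, h (∑ i, c i • x i) z = 0 := by
      intro z
      have h1 : h (∑ i, c i • x i) z = ∑ i, c i * h (x i) z := by
        rw [map_sum, LinearMap.sum_apply]
        refine Finset.sum_congr rfl fun i _ => ?_
        rw [map_smul, LinearMap.smul_apply, smul_eq_mul]
      have h2 := hker z
      rw [hfw] at h2
      have h3 : ∀ i, Φ z i = h (x i) z := fun i => rfl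
      rw [Finset.sum_congr rfl (fun i _ => by rw [h3])] at h2
      rw [h1, ← h2]
      exact Finset.sum_congr rfl fun i _ => mul_comm _ _
    have hzero := hind c (hnd _ hcomb)
    apply hf0
    rw [hfw]
    simp [hzero]
  obtain ⟨z, hz⟩ := hmem
  exact ⟨z, fun i => congrFun hz i ▸ rfl⟩

lemma aux_eigen (L : V →ₗ[ℝ] V) (u₀ : V) (hu₀ : u₀ ≠ 0)
    (hall : ∀ u : V, ∃ t : ℝ, L u = t • u) :
    ∃ c : ℝ, L = c • (LinearMap.id : V →ₗ[ℝ] V) := by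
  obtain ⟨c, hc⟩ := hall u₀
  refine ⟨c, ?_⟩
  ext v
  simp only [LinearMap.smul_apply, LinearMap.id_coe, id_eq]
  by_cases hv : v = 0
  · simp [hv]
  obtain ⟨tv, htv⟩ := hall v
  by_cases hdep : ∃ s : ℝ, v = s • u₀
  · obtain ⟨s, rfl⟩ := hdep
    rw [map_smul, hc, smul_comm]
  · obtain ⟨ts, hts⟩ := hall (u₀ + v)
    rw [map_add, hc, htv, smul_add] at hts
    have key : (c - ts) • u₀ + (tv - ts) • v = 0 := by
      rw [sub_smul, sub_smul]
      abel_nf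
      linear_combination (norm := abel) hts
    have hbv : tv - ts = 0 := by
      by_contra hb
      apply hdep
      refine ⟨(ts - c) / (tv - ts), ?_⟩
      have h1 : (tv - ts) • v = (ts - c) • u₀ := by
        linear_combination (norm := module) key
      rw [div_eq_inv_mul, ← smul_smul, ← h1, smul_smul, inv_mul_cancel₀ hb, one_smul]
    have hau : c - ts = 0 := by
      rw [hbv, zero_smul, add_zero] at key
      by_contra ha
      exact hu₀ (by simpa [ha] using (smul_eq_zero.mp key).resolve_left ha)
    have : tv = c := by linarith [sub_eq_zero.mp hbv, sub_eq_zero.mp hau]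
    rw [htv, this]

variable (he : ∀ j k, h (e j) (e k) = if j = k then ε j else 0)
  (hε : ∀ j, ε j = 1 ∨ ε j = -1)

include he in
lemma aux_repr : ∀ (x : V) (j : Fin n), h x (e j) = e.repr x j * ε j := by
  intro x j
  conv_lhs => rw [← e.sum_repr x]
  rw [map_sum, LinearMap.sum_apply]
  have : ∀ i ∈ Finset.univ, (h ((e.repr x i) • e i)) (e j)
      = (e.repr x i) * (if i = j then ε i else 0) := by
    intro i _
    rw [map_smul, LinearMap.smul_apply, smul_eq_mul, he]
  rw [Finset.sum_congr rfl this]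
  simp

include he hε in
lemma aux_sum_h : ∀ x y : V, ∑ j, ε j * (h x (e j) * h y (e j)) = h x y := by
  intro x y
  conv_rhs => rw [← e.sum_repr y]
  rw [map_sum]
  have h1 : ∀ j ∈ Finset.univ, ε j * (h x (e j) * h y (e j))
      = h x ((e.repr y j) • e j) := by
    intro j _
    rw [map_smul, smul_eq_mul, aux_repr h e ε he, aux_repr h e ε he]
    rcases hε j with hj | hj <;> rw [hj] <;> ring
  exact Finset.sum_congr rfl h1

include he hε in
lemma aux_sum_eps : ∑ j, ε j * h (e j) (e j) = (n : ℝ) := by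
  have : ∀ j ∈ Finset.univ, ε j * h (e j) (e j) = 1 := by
    intro j _
    rw [he]
    rcases hε j with hj | hj <;> rw [hj] <;> norm_num
  rw [Finset.sum_congr rfl this]
  simp

include he hε in
lemma aux_eps_repr : ∀ x : V, ∑ j, (ε j * h x (e j)) • e j = x := by
  intro x
  conv_rhs => rw [← e.sum_repr x]
  refine Finset.sum_congr rfl fun j _ => ?_
  rw [aux_repr h e ε he]
  rcases hε j with hj | hj <;> rw [hj] <;> [skip; skip] <;> norm_num

include he hε in
lemma aux_sum_quad (p q r s : ℝ) (a b c d : V) :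
    ∑ j, ε j * ((p * h a (e j) + q * h b (e j)) * (r * h c (e j) + s * h d (e j)))
      = p*r*h a c + p*s*h a d + q*r*h b c + q*s*h b d := by
  have h1 : ∀ j ∈ Finset.univ, ε j * ((p * h a (e j) + q * h b (e j)) *
      (r * h c (e j) + s * h d (e j)))
      = p*r*(ε j*(h a (e j) * h c (e j))) + p*s*(ε j*(h a (e j)*h d (e j)))
        + q*r*(ε j*(h b (e j)*h c (e j))) + q*s*(ε j*(h b (e j)*h d (e j))) := by
    intro j _; ring
  rw [Finset.sum_congr rfl h1, Finset.sum_add_distrib, Finset.sum_add_distrib,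
    Finset.sum_add_distrib, ← Finset.mul_sum, ← Finset.mul_sum, ← Finset.mul_sum,
    ← Finset.mul_sum, aux_sum_h h e ε he hε, aux_sum_h h e ε he hε,
    aux_sum_h h e ε he hε, aux_sum_h h e ε he hε]

end Aux

set_option maxHeartbeats 2000000 in
/-- for n ≥ 4 and 𝒮 not proportional to the identity, Weyl(R*) = 0 iff the
hypersurface is affine quasi-umbilical at the point, i.e. rank(S − ρ·h) = 1 for some ρ. -/
theorem statement1
    {V : Type*} [AddCommGroup V] [Module ℝ V]
    (n : ℕ) (hn : 4 ≤ n)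
    (h : LinearMap.BilinForm ℝ V)
    (hsymm : ∀ X Y, h X Y = h Y X)
    (hnd : ∀ X : V, (∀ Y, h X Y = 0) → X = 0)
    (e : Module.Basis (Fin n) ℝ V) (ε : Fin n → ℝ)
    (hε : ∀ j, ε j = 1 ∨ ε j = -1)
    (he : ∀ j k, h (e j) (e k) = if j = k then ε j else 0)
    (𝒮 : V →ₗ[ℝ] V) (hsa : ∀ X Y, h (𝒮 X) Y = h X (𝒮 Y))
    (S : V → V → ℝ) (hS : S = fun X Y => h X (𝒮 Y))
    (Rstar : V → V → V → V → ℝ)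
    (hRstar : Rstar = fun X₁ X₂ X₃ X₄ => (1 / 2 : ℝ) * KN S S X₁ X₂ X₃ X₄)
    (hnp : ∀ c : ℝ, 𝒮 ≠ c • (LinearMap.id : V →ₗ[ℝ] V)) :
    (∀ X₁ X₂ X₃ X₄, weyl (fun X Y => h X Y) ε (⇑e) Rstar X₁ X₂ X₃ X₄ = 0) ↔
      ∃ ρ : ℝ, ∃ 𝒜 : V →ₗ[ℝ] V,
        (∀ X Y, h (𝒜 X) Y = S X Y - ρ * h X Y) ∧ LinearMap.rank 𝒜 = 1 := by
  subst hS hRstar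
  classical
  haveI : FiniteDimensional ℝ V := Module.Finite.of_basis e
  have hfr : Module.finrank ℝ V = n := by
    rw [Module.finrank_eq_card_basis e, Fintype.card_fin]
  have hn4 : (4:ℝ) ≤ (n:ℝ) := by exact_mod_cast hn
  have hn2 : ((n:ℝ) - 2) ≠ 0 := by linarith
  have hn1 : ((n:ℝ) - 1) ≠ 0 := by linarith
  have hSsymm : ∀ X Y : V, h X (𝒮 Y) = h Y (𝒮 X) := by
    intro X Y; rw [hsymm X (𝒮 Y), hsa Y X]
  constructor
  · -- hard direction
    intro hW
    set τ : ℝ := ∑ j, ε j * h (e j) (𝒮 (e j)) with hτ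
    set σ₂ : ℝ := ∑ j, ε j * h (𝒮 (e j)) (𝒮 (e j)) with hσ₂
    set α : ℝ := 2*τ/((n:ℝ)-2) with hα
    set β : ℝ := -2/((n:ℝ)-2) with hβdef
    set γ : ℝ := -(τ*τ - σ₂)/(((n:ℝ)-2)*((n:ℝ)-1)) with hγ
    have hβ0 : β ≠ 0 := by
      rw [hβdef, div_ne_zero_iff]
      exact ⟨by norm_num, hn2⟩
    set g : V → V := fun x => α • 𝒮 x + β • 𝒮 (𝒮 x) + γ • x with hg
    have hsg : ∀ x y : V, h (g x) y = α * h (𝒮 x) y + β * h (𝒮 (𝒮 x)) y + γ * h x y := by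
      intro x y
      simp only [hg, map_add, map_smul, LinearMap.add_apply, LinearMap.smul_apply, smul_eq_mul]
    have ric_eq : ∀ X Y : V, ricci ε ⇑e (fun X₁ X₂ X₃ X₄ => (1/2 : ℝ) * KN
        (fun X Y => h X (𝒮 Y)) (fun X Y => h X (𝒮 Y)) X₁ X₂ X₃ X₄) X Y
        = τ * h X (𝒮 Y) - h (𝒮 X) (𝒮 Y) := by
      intro X Y
      simp only [ricci, KN]
      have h5 : ∀ j ∈ Finset.univ, ε j * ((1/2 : ℝ) *
          (h (e j) (𝒮 (e j)) * h X (𝒮 Y) + h X (𝒮 Y) * h (e j) (𝒮 (e j))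
            - h (e j) (𝒮 Y) * h X (𝒮 (e j)) - h X (𝒮 (e j)) * h (e j) (𝒮 Y)))
          = h X (𝒮 Y) * (ε j * h (e j) (𝒮 (e j)))
            - ε j * (h (𝒮 Y) (e j) * h (𝒮 X) (e j)) := by
        intro j _
        rw [hsymm (e j) (𝒮 Y), ← hsa X (e j)]
        ring
      rw [Finset.sum_congr rfl h5, Finset.sum_sub_distrib, ← Finset.mul_sum,
        aux_sum_h h e ε he hε (𝒮 Y) (𝒮 X), ← hτ, hsymm (𝒮 Y) (𝒮 X)]
      ring
    have scal_eq : scal ε ⇑e (fun X₁ X₂ X₃ X₄ => (1/2 : ℝ) * KN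
        (fun X Y => h X (𝒮 Y)) (fun X Y => h X (𝒮 Y)) X₁ X₂ X₃ X₄) = τ*τ - σ₂ := by
      rw [scal]
      have h8 : ∀ j ∈ Finset.univ, ε j * ricci ε ⇑e (fun X₁ X₂ X₃ X₄ => (1/2 : ℝ) * KN
          (fun X Y => h X (𝒮 Y)) (fun X Y => h X (𝒮 Y)) X₁ X₂ X₃ X₄) (e j) (e j)
          = τ * (ε j * h (e j) (𝒮 (e j))) - ε j * h (𝒮 (e j)) (𝒮 (e j)) := by
        intro j _
        rw [ric_eq]; ring
      rw [Finset.sum_congr rfl h8, Finset.sum_sub_distrib, ← Finset.mul_sum, ← hτ, ← hσ₂]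
    have ric_fun : ricci ε ⇑e (fun X₁ X₂ X₃ X₄ => (1/2 : ℝ) * KN
        (fun X Y => h X (𝒮 Y)) (fun X Y => h X (𝒮 Y)) X₁ X₂ X₃ X₄)
        = fun X Y => τ * h X (𝒮 Y) - h (𝒮 X) (𝒮 Y) :=
      funext fun X => funext fun Y => ric_eq X Y
    -- the fundamental vector identity
    have key1 : ∀ u v z : V,
        (2 * h (𝒮 v) z) • 𝒮 u - (2 * h (𝒮 u) z) • 𝒮 v - (h (g v) z) • u
          - (h v z) • g u + (h u z) • g v + (h (g u) z) • v = 0 := by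
      intro u v z
      apply hnd
      intro y
      have hWi := hW u v z y
      rw [weyl, ric_fun, scal_eq] at hWi
      simp only [KN] at hWi
      simp only [map_add, map_sub, map_smul, LinearMap.add_apply, LinearMap.sub_apply,
        LinearMap.smul_apply, LinearMap.zero_apply, smul_eq_mul, hsg]
      simp only [← hsa] at hWi ⊢
      rw [hα, hβdef, hγ]
      linear_combination (norm := (field_simp; ring1)) (2:ℝ) * hWi
    clear hW ric_fun ric_eq scal_eq
    -- a non-eigenvector u₀
    have hex : ∃ u₀ : V, ∀ t : ℝ, 𝒮 u₀ ≠ t • u₀ := by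
      by_contra hcon
      push_neg at hcon
      have hne : e ⟨0, by omega⟩ ≠ 0 := e.ne_zero _
      obtain ⟨c, hc⟩ := aux_eigen 𝒮 (e ⟨0, by omega⟩) hne hcon
      exact hnp c hc
    obtain ⟨u₀, hu₀⟩ := hex
    have hu₀ne : u₀ ≠ 0 := by
      intro h0
      exact hu₀ 0 (by rw [h0]; simp)
    have hpind : ∀ a b : ℝ, a • u₀ + b • 𝒮 u₀ = 0 → a = 0 ∧ b = 0 := by
      intro a b hab
      by_cases hb : b = 0
      · subst hb
        rw [zero_smul, add_zero] at hab
        exact ⟨(smul_eq_zero.mp hab).resolve_right hu₀ne, rfl⟩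
      · exfalso
        apply hu₀ (-a/b)
        have h1 : b • 𝒮 u₀ = (-a) • u₀ := by
          linear_combination (norm := module) hab
        rw [div_eq_inv_mul, ← smul_smul, ← h1, smul_smul, inv_mul_cancel₀ hb, one_smul]
    -- 𝒮²u₀ is a combination of u₀ and 𝒮u₀
    have hLLu₀ : ∃ p q : ℝ, 𝒮 (𝒮 u₀) = p • u₀ + q • 𝒮 u₀ := by
      by_contra hcon
      push_neg at hcon
      have hind3 : ∀ c : Fin 3 → ℝ, (∑ i, c i • ![u₀, 𝒮 u₀, 𝒮 (𝒮 u₀)] i) = 0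
          → ∀ i, c i = 0 := by
        intro c hc
        rw [Fin.sum_univ_three] at hc
        simp only [Matrix.cons_val_zero, Matrix.cons_val_one, Matrix.head_cons,
          Matrix.cons_val_two, Matrix.tail_cons] at hc
        by_cases h2 : c 2 = 0
        · rw [h2, zero_smul, add_zero] at hc
          obtain ⟨h0, h1⟩ := hpind _ _ hc
          intro i; fin_cases i <;> simp [h0, h1, h2]
        · exfalso
          apply hcon (-(c 0)/(c 2)) (-(c 1)/(c 2))
          have hy : (c 2) • 𝒮 (𝒮 u₀) = (-(c 0)) • u₀ + (-(c 1)) • 𝒮 u₀ := by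
            linear_combination (norm := module) hc
          rw [div_eq_inv_mul, div_eq_inv_mul, ← smul_smul, ← smul_smul, ← smul_add,
            ← hy, smul_smul, inv_mul_cancel₀ h2, one_smul]
      obtain ⟨z, hz⟩ := aux_exists_dual h hnd ![u₀, 𝒮 u₀, 𝒮 (𝒮 u₀)] hind3 ![0,0,1]
      have hz0 : h u₀ z = 0 := by simpa using hz 0
      have hz1 : h (𝒮 u₀) z = 0 := by simpa using hz 1
      have hz2 : h (𝒮 (𝒮 u₀)) z = 1 := by simpa using hz 2
      have hspan : ∀ v : V, v ∈ Submodule.span ℝ ({u₀, 𝒮 u₀, 𝒮 (𝒮 u₀)} : Set V) := by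
        intro v
        have hs := key1 u₀ v z
        have e1 : h (g u₀) z = β := by rw [hsg, hz0, hz1, hz2]; ring
        rw [hz0, hz1, e1] at hs
        have hbv : β • v = (h (g v) z) • u₀ + (h v z) • g u₀ - (2*h (𝒮 v) z) • 𝒮 u₀ := by
          linear_combination (norm := module) hs
        have hv2 : v = β⁻¹ • ((h (g v) z) • u₀ + (h v z) • g u₀ - (2*h (𝒮 v) z) • 𝒮 u₀) := by
          rw [← hbv, smul_smul, inv_mul_cancel₀ hβ0, one_smul]
        rw [hv2]
        have hm0 : u₀ ∈ ({u₀, 𝒮 u₀, 𝒮 (𝒮 u₀)} : Set V) := by simp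
        have hm1 : 𝒮 u₀ ∈ ({u₀, 𝒮 u₀, 𝒮 (𝒮 u₀)} : Set V) := by simp
        have hm2 : 𝒮 (𝒮 u₀) ∈ ({u₀, 𝒮 u₀, 𝒮 (𝒮 u₀)} : Set V) := by simp
        have hgmem : g u₀ ∈ Submodule.span ℝ ({u₀, 𝒮 u₀, 𝒮 (𝒮 u₀)} : Set V) := by
          rw [hg]
          exact Submodule.add_mem _ (Submodule.add_mem _
            (Submodule.smul_mem _ _ (Submodule.subset_span hm1))
            (Submodule.smul_mem _ _ (Submodule.subset_span hm2)))
            (Submodule.smul_mem _ _ (Submodule.subset_span hm0))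
        exact Submodule.smul_mem _ _ (Submodule.sub_mem _
          (Submodule.add_mem _ (Submodule.smul_mem _ _ (Submodule.subset_span hm0))
            (Submodule.smul_mem _ _ hgmem))
          (Submodule.smul_mem _ _ (Submodule.subset_span hm1)))
      have htop : (Submodule.span ℝ ({u₀, 𝒮 u₀, 𝒮 (𝒮 u₀)} : Set V)) = ⊤ :=
        Submodule.eq_top_iff'.mpr hspan
      have hle : Module.finrank ℝ V ≤ 3 := by
        have hcard := finrank_span_le_card (R := ℝ) ({u₀, 𝒮 u₀, 𝒮 (𝒮 u₀)} : Set V)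
        have hc3 : ({u₀, 𝒮 u₀, 𝒮 (𝒮 u₀)} : Set V).toFinset.card ≤ 3 := by
          rw [Set.toFinset_insert, Set.toFinset_insert, Set.toFinset_singleton]
          refine le_trans (Finset.card_insert_le _ _) (Nat.succ_le_succ ?_)
          refine le_trans (Finset.card_insert_le _ _) (Nat.succ_le_succ ?_)
          simp
        calc Module.finrank ℝ V = Module.finrank ℝ (⊤ : Submodule ℝ V) :=
              (finrank_top ℝ V).symm
          _ = Module.finrank ℝ (Submodule.span ℝ ({u₀, 𝒮 u₀, 𝒮 (𝒮 u₀)} : Set V)) := by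
              rw [htop]
          _ ≤ 3 := le_trans hcard hc3
      rw [hfr] at hle
      omega
    obtain ⟨p, q, hpq⟩ := hLLu₀
    have hind2 : ∀ c : Fin 2 → ℝ, (∑ i, c i • ![u₀, 𝒮 u₀] i) = 0 → ∀ i, c i = 0 := by
      intro c hc
      rw [Fin.sum_univ_two] at hc
      simp only [Matrix.cons_val_zero, Matrix.cons_val_one, Matrix.head_cons] at hc
      obtain ⟨h0, h1⟩ := hpind _ _ hc
      intro i; fin_cases i <;> simp [h0, h1]
    obtain ⟨z₁, hz₁⟩ := aux_exists_dual h hnd ![u₀, 𝒮 u₀] hind2 ![0,1]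
    have hz₁0 : h u₀ z₁ = 0 := by simpa using hz₁ 0
    have hz₁1 : h (𝒮 u₀) z₁ = 1 := by simpa using hz₁ 1
    set ρ : ℝ := (α + β*q)/2 with hρ
    have hgz₁ : h (g u₀) z₁ = α + β*q := by
      rw [hsg, hpq, map_add, map_smul, map_smul, LinearMap.add_apply, LinearMap.smul_apply,
        LinearMap.smul_apply, hz₁0, hz₁1]
      simp
    have hNmem : ∀ v : V, 𝒮 v - ρ • v ∈ Submodule.span ℝ ({u₀, 𝒮 u₀} : Set V) := by
      intro v
      have hs := key1 u₀ v z₁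
      rw [hz₁0, hz₁1, hgz₁] at hs
      have hgu₀mem : g u₀ ∈ Submodule.span ℝ ({u₀, 𝒮 u₀} : Set V) := by
        simp only [hg]
        rw [hpq]
        have hm0 : u₀ ∈ ({u₀, 𝒮 u₀} : Set V) := by simp
        have hm1 : 𝒮 u₀ ∈ ({u₀, 𝒮 u₀} : Set V) := by simp
        exact Submodule.add_mem _ (Submodule.add_mem _
          (Submodule.smul_mem _ _ (Submodule.subset_span hm1))
          (Submodule.smul_mem _ _ (Submodule.add_mem _
            (Submodule.smul_mem _ _ (Submodule.subset_span hm0))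
            (Submodule.smul_mem _ _ (Submodule.subset_span hm1)))))
          (Submodule.smul_mem _ _ (Submodule.subset_span hm0))
      have hv2 : 𝒮 v - ρ • v = (h (𝒮 v) z₁) • 𝒮 u₀ - ((h (g v) z₁)/2) • u₀
          - ((h v z₁)/2) • g u₀ := by
        rw [hρ]
        linear_combination (norm := module) (-(1:ℝ)/2) • hs
      rw [hv2]
      have hm0 : u₀ ∈ ({u₀, 𝒮 u₀} : Set V) := by simp
      have hm1 : 𝒮 u₀ ∈ ({u₀, 𝒮 u₀} : Set V) := by simp
      exact Submodule.sub_mem _ (Submodule.sub_mem _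
        (Submodule.smul_mem _ _ (Submodule.subset_span hm1))
        (Submodule.smul_mem _ _ (Submodule.subset_span hm0)))
        (Submodule.smul_mem _ _ hgu₀mem)
    set N : V →ₗ[ℝ] V := 𝒮 - ρ • LinearMap.id with hNdef
    have hNv : ∀ v, N v = 𝒮 v - ρ • v := by
      intro v
      simp [hNdef]
    have hrangeN : LinearMap.range N ≤ Submodule.span ℝ ({u₀, 𝒮 u₀} : Set V) := by
      rintro x ⟨v, rfl⟩
      rw [hNv]
      exact hNmem v
    have hk2 : 2 ≤ Module.finrank ℝ (LinearMap.ker N) := by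
      have h9 := LinearMap.finrank_range_add_finrank_ker N
      have h10 : Module.finrank ℝ (LinearMap.range N) ≤ 2 := by
        refine le_trans (Submodule.finrank_mono hrangeN) ?_
        refine le_trans (finrank_span_le_card (R := ℝ) ({u₀, 𝒮 u₀} : Set V)) ?_
        rw [Set.toFinset_insert, Set.toFinset_singleton]
        refine le_trans (Finset.card_insert_le _ _) (Nat.succ_le_succ ?_)
        simp
      rw [hfr] at h9
      omega
    have hker_ne : ∃ u₁, u₁ ∈ LinearMap.ker N ∧ u₁ ≠ 0 := by
      by_contra hcon
      push_neg at hcon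
      have hbot : LinearMap.ker N = ⊥ := by
        rw [Submodule.eq_bot_iff]
        exact fun x hx => hcon x hx
      rw [hbot, finrank_bot] at hk2
      omega
    obtain ⟨u₁, hu₁K, hu₁ne⟩ := hker_ne
    have hu₂ex : ∃ u₂, u₂ ∈ LinearMap.ker N ∧ u₂ ∉ Submodule.span ℝ ({u₁} : Set V) := by
      by_contra hcon
      push_neg at hcon
      have hle : LinearMap.ker N ≤ Submodule.span ℝ ({u₁} : Set V) := fun x hx => hcon x hx
      have := Submodule.finrank_mono (R := ℝ) hle
      rw [finrank_span_singleton hu₁ne] at this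
      omega
    obtain ⟨u₂, hu₂K, hu₂ns⟩ := hu₂ex
    have hu₂ne : u₂ ≠ 0 := by
      intro h0
      exact hu₂ns (h0 ▸ Submodule.zero_mem _)
    have hLu₁ : 𝒮 u₁ = ρ • u₁ := by
      have h11 : N u₁ = 0 := hu₁K
      rw [hNv] at h11
      linear_combination (norm := module) h11
    have hLu₂ : 𝒮 u₂ = ρ • u₂ := by
      have h11 : N u₂ = 0 := hu₂K
      rw [hNv] at h11
      linear_combination (norm := module) h11
    set μ : ℝ := α*ρ + β*ρ^2 + γ with hμ
    have hQRgen : ∀ (u : V), u ≠ 0 → 𝒮 u = ρ • u →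
        ∀ v : V, ∃ cu : ℝ, g v + μ • v - (2*ρ) • 𝒮 v = cu • u := by
      intro u hune hLu v
      have hind1 : ∀ c : Fin 1 → ℝ, (∑ i, c i • ![u] i) = 0 → ∀ i, c i = 0 := by
        intro c hc
        rw [Fin.sum_univ_one] at hc
        simp only [Matrix.cons_val_zero] at hc
        intro i
        fin_cases i
        exact (smul_eq_zero.mp hc).resolve_right hune
      obtain ⟨z, hzv⟩ := aux_exists_dual h hnd ![u] hind1 ![1]
      have hz : h u z = 1 := by simpa using hzv 0
      have hgu : g u = μ • u := by
        simp only [hg]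
        rw [hLu, map_smul, hLu, smul_smul, hμ]
        module
      have h𝒮uz : h (𝒮 u) z = ρ := by
        rw [hLu, map_smul, LinearMap.smul_apply, hz, smul_eq_mul, mul_one]
      have hguz : h (g u) z = μ := by
        rw [hgu, map_smul, LinearMap.smul_apply, hz, smul_eq_mul, mul_one]
      have hs := key1 u v z
      rw [h𝒮uz, hguz, hgu, hz, hLu] at hs
      refine ⟨h (g v) z + μ * h v z - 2*ρ*h (𝒮 v) z, ?_⟩
      linear_combination (norm := module) hs
    have hQR : ∀ v : V, g v + μ • v - (2*ρ) • 𝒮 v = 0 := by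
      intro v
      obtain ⟨c₁, hc₁⟩ := hQRgen u₁ hu₁ne hLu₁ v
      obtain ⟨c₂, hc₂⟩ := hQRgen u₂ hu₂ne hLu₂ v
      have hc₂0 : c₂ = 0 := by
        by_contra hcc
        apply hu₂ns
        have h12 : c₂ • u₂ = c₁ • u₁ := by rw [← hc₁, ← hc₂]
        have h13 : u₂ = (c₁/c₂) • u₁ := by
          rw [div_eq_inv_mul, ← smul_smul, ← h12, smul_smul, inv_mul_cancel₀ hcc, one_smul]
        rw [h13]
        exact Submodule.smul_mem _ _ (Submodule.mem_span_singleton_self _)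
      rw [hc₂0, zero_smul] at hc₂
      exact hc₂
    have hgv : ∀ v : V, g v = (2*ρ) • 𝒮 v - μ • v := by
      intro v
      have h12 := hQR v
      linear_combination (norm := module) h12
    set cc : ℝ := μ - ρ^2 with hcc
    have hE1 : ∀ u v z : V, (h (𝒮 v) z - ρ * h v z) • (𝒮 u - ρ • u)
        - (h (𝒮 u) z - ρ * h u z) • (𝒮 v - ρ • v)
        + cc • ((h v z) • u - (h u z) • v) = 0 := by
      intro u v z
      have hs := key1 u v z
      rw [hgv u, hgv v] at hs
      simp only [map_sub, map_smul, LinearMap.sub_apply, LinearMap.smul_apply,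
        smul_eq_mul] at hs
      rw [hcc]
      linear_combination (norm := module) ((1:ℝ)/2) • hs
    have hcc0 : cc = 0 := by
      by_contra hccne
      have hind1 : ∀ c : Fin 1 → ℝ, (∑ i, c i • ![u₁] i) = 0 → ∀ i, c i = 0 := by
        intro c hc
        rw [Fin.sum_univ_one] at hc
        simp only [Matrix.cons_val_zero] at hc
        intro i
        fin_cases i
        exact (smul_eq_zero.mp hc).resolve_right hu₁ne
      obtain ⟨z, hzv⟩ := aux_exists_dual h hnd ![u₁] hind1 ![1]
      have hz : h u₁ z = 1 := by simpa using hzv 0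
      have hvv : ∀ v : V, v = (h v z) • u₁ := by
        intro v
        have h12 := hE1 u₁ v z
        rw [hLu₁, hz] at h12
        have h13 : cc • ((h v z) • u₁ - v) = 0 := by
          have h14 : h (ρ • u₁) z = ρ := by
            rw [map_smul, LinearMap.smul_apply, hz, smul_eq_mul, mul_one]
          rw [h14] at h12
          linear_combination (norm := module) h12
        have h15 := (smul_eq_zero.mp h13).resolve_left hccne
        have h16 : v = (h v z) • u₁ := by
          linear_combination (norm := module) -h15
        exact h16
      have ha := hvv (e ⟨0, by omega⟩)
      have hb := hvv (e ⟨1, by omega⟩)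
      have hane : h (e ⟨0, by omega⟩) z ≠ 0 := by
        intro h0
        rw [h0, zero_smul] at ha
        exact e.ne_zero _ ha
      have hb2 := congrArg (fun t => (h (e ⟨0, by omega⟩) z) • t) hb
      rw [smul_smul, mul_comm, ← smul_smul, ← ha] at hb2
      have hcontr := congrArg (fun x => e.repr x ⟨1, by omega⟩) hb2
      simp only [Module.Basis.repr_self, map_smul, Finsupp.smul_apply, Finsupp.single_apply,
        smul_eq_mul] at hcontr
      rw [if_pos trivial, if_neg (by simp [Fin.ext_iff])] at hcontr
      simp only [mul_one, mul_zero] at hcontr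
      exact hane hcontr
    have hNne : ∃ v₁, 𝒮 v₁ - ρ • v₁ ≠ 0 := by
      by_contra hcon
      push_neg at hcon
      apply hnp ρ
      ext v
      have h12 := hcon v
      have h13 : 𝒮 v = ρ • v := by
        linear_combination (norm := module) h12
      simpa using h13
    obtain ⟨v₁, hv₁⟩ := hNne
    have hind1 : ∀ c : Fin 1 → ℝ, (∑ i, c i • ![𝒮 v₁ - ρ • v₁] i) = 0 → ∀ i, c i = 0 := by
      intro c hc
      rw [Fin.sum_univ_one] at hc
      simp only [Matrix.cons_val_zero] at hc
      intro i
      fin_cases i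
      exact (smul_eq_zero.mp hc).resolve_right hv₁
    obtain ⟨z₂, hz₂v⟩ := aux_exists_dual h hnd ![𝒮 v₁ - ρ • v₁] hind1 ![1]
    have hz₂ : h (𝒮 v₁ - ρ • v₁) z₂ = 1 := by simpa using hz₂v 0
    have hz₂' : h (𝒮 v₁) z₂ - ρ * h v₁ z₂ = 1 := by
      rw [map_sub, map_smul, LinearMap.sub_apply, LinearMap.smul_apply, smul_eq_mul] at hz₂
      exact hz₂
    have hrange1 : ∀ u : V, 𝒮 u - ρ • u = (h (𝒮 u) z₂ - ρ * h u z₂) • (𝒮 v₁ - ρ • v₁) := by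
      intro u
      have h13 := hE1 u v₁ z₂
      rw [hcc0, zero_smul, add_zero, hz₂', one_smul] at h13
      linear_combination (norm := module) h13
    refine ⟨ρ, N, ?_, ?_⟩
    · intro X Y
      rw [hNdef]
      simp only [LinearMap.sub_apply, LinearMap.smul_apply, LinearMap.id_coe, id_eq,
        map_sub, map_smul, smul_eq_mul]
      rw [hsa]
    · have hrgeq : LinearMap.range N = Submodule.span ℝ ({𝒮 v₁ - ρ • v₁} : Set V) := by
        apply le_antisymm
        · rintro x ⟨u, rfl⟩
          rw [hNv u, hrange1 u]
          exact Submodule.smul_mem _ _ (Submodule.mem_span_singleton_self _)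
        · rw [Submodule.span_le, Set.singleton_subset_iff]
          exact ⟨v₁, hNv v₁⟩
      rw [LinearMap.rank, hrgeq, Module.rank_eq_one_iff_finrank_eq_one]
      exact finrank_span_singleton hv₁
  · -- easy direction
    rintro ⟨ρ, 𝒜, h𝒜, hrank⟩
    have h1 : Module.rank ℝ ↥(LinearMap.range 𝒜) = 1 := hrank
    obtain ⟨v₀, hv₀ne, hv₀⟩ := rank_eq_one_iff.mp h1
    set w : V := (v₀ : V) with hw
    have hwne : w ≠ 0 := by simpa [hw] using hv₀ne
    have hrep : ∀ X : V, ∃ r : ℝ, 𝒜 X = r • w := by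
      intro X
      obtain ⟨r, hr⟩ := hv₀ ⟨𝒜 X, LinearMap.mem_range_self _ X⟩
      exact ⟨r, by have h2 := congrArg Subtype.val hr; exact h2.symm⟩
    choose ψ hψ using hrep
    have hA : ∀ X Y : V, h X (𝒮 Y) = ρ * h X Y + ψ X * h w Y := by
      intro X Y
      have h2 := h𝒜 X Y
      rw [hψ X, map_smul, LinearMap.smul_apply, smul_eq_mul] at h2
      linarith
    have hAsym : ∀ X Y : V, ψ X * h w Y = ψ Y * h w X := by
      intro X Y
      have h2 := hA X Y
      have h3 := hA Y X
      rw [hSsymm X Y] at h2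
      rw [hsymm Y X] at h3
      linarith
    -- linearity of ψ and ψ w = trace sum
    have hψadd : ∀ x y : V, ψ (x + y) = ψ x + ψ y := by
      intro x y
      apply smul_left_injective ℝ hwne
      simp only
      rw [← hψ, map_add, hψ, hψ, add_smul]
    have hψsmul : ∀ (c : ℝ) (x : V), ψ (c • x) = c * ψ x := by
      intro c x
      apply smul_left_injective ℝ hwne
      simp only
      rw [← hψ, map_smul, hψ, smul_smul]
    have hm₁ : ∑ j, ε j * (ψ (e j) * h w (e j)) = ψ w := by
      let Ψ : V →ₗ[ℝ] ℝ :=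
        { toFun := ψ
          map_add' := hψadd
          map_smul' := fun c x => by simp [hψsmul c x] }
      have h4 : ∀ j ∈ Finset.univ, ε j * (ψ (e j) * h w (e j))
          = Ψ ((ε j * h w (e j)) • e j) := by
        intro j _
        simp only [Ψ, map_smul, LinearMap.coe_mk, AddHom.coe_mk, smul_eq_mul]
        ring
      rw [Finset.sum_congr rfl h4, ← map_sum, aux_eps_repr h e ε he hε w]
      rfl
    -- Ricci computation
    have ric_eq : ∀ X Y : V, ricci ε ⇑e (fun X₁ X₂ X₃ X₄ => (1/2 : ℝ) * KN
        (fun X Y => h X (𝒮 Y)) (fun X Y => h X (𝒮 Y)) X₁ X₂ X₃ X₄) X Y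
        = ((n:ℝ) - 2) * (ρ^2/2 * h X Y + ρ*(ψ X * h w Y))
          + (ρ^2*(n:ℝ)/2 + ρ * ψ w) * h X Y := by
      intro X Y
      simp only [ricci, KN]
      have h5 : ∀ j ∈ Finset.univ, ε j * ((1/2 : ℝ) *
          (h (e j) (𝒮 (e j)) * h X (𝒮 Y) + h X (𝒮 Y) * h (e j) (𝒮 (e j))
            - h (e j) (𝒮 Y) * h X (𝒮 (e j)) - h X (𝒮 (e j)) * h (e j) (𝒮 Y)))
          = (ρ * h X Y + ψ X * h w Y) * (ρ * (ε j * h (e j) (e j))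
              + (ε j * (ψ (e j) * h w (e j))))
            - ε j * ((ρ * h Y (e j) + ψ Y * h w (e j)) * (ρ * h X (e j) + ψ X * h w (e j))) := by
        intro j _
        have e1 : h (e j) (𝒮 (e j)) = ρ * h (e j) (e j) + ψ (e j) * h w (e j) := hA _ _
        have e2 : h X (𝒮 Y) = ρ * h X Y + ψ X * h w Y := hA _ _
        have e3 : h (e j) (𝒮 Y) = ρ * h Y (e j) + ψ Y * h w (e j) := by
          rw [hA, hsymm (e j) Y, hAsym (e j) Y]
        have e4 : h X (𝒮 (e j)) = ρ * h X (e j) + ψ X * h w (e j) := hA _ _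
        rw [e1, e2, e3, e4]; ring
      rw [Finset.sum_congr rfl h5, Finset.sum_sub_distrib, ← Finset.mul_sum]
      have h6 : ∑ j, (ρ * (ε j * h (e j) (e j)) + (ε j * (ψ (e j) * h w (e j))))
          = ρ * (n:ℝ) + ψ w := by
        rw [Finset.sum_add_distrib, ← Finset.mul_sum, aux_sum_eps h e ε he hε, hm₁]
      have h7 : ∑ j, ε j * ((ρ * h Y (e j) + ψ Y * h w (e j)) * (ρ * h X (e j) + ψ X * h w (e j)))
          = ρ*ρ*h Y X + ρ*(ψ X)*h Y w + (ψ Y)*ρ*h w X + (ψ Y)*(ψ X)*h w w :=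
        aux_sum_quad h e ε he hε ρ (ψ Y) ρ (ψ X) Y w X w
      rw [h6, h7, hsymm Y X, hsymm Y w]
      linear_combination ρ * hAsym X Y - ψ X * hAsym Y w
    have scal_eq : scal ε ⇑e (fun X₁ X₂ X₃ X₄ => (1/2 : ℝ) * KN
        (fun X Y => h X (𝒮 Y)) (fun X Y => h X (𝒮 Y)) X₁ X₂ X₃ X₄)
        = 2*((n:ℝ) - 1)*(ρ^2*(n:ℝ)/2 + ρ * ψ w) := by
      rw [scal]
      have h8 : ∀ j ∈ Finset.univ, ε j * ricci ε ⇑e (fun X₁ X₂ X₃ X₄ => (1/2 : ℝ) * KN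
          (fun X Y => h X (𝒮 Y)) (fun X Y => h X (𝒮 Y)) X₁ X₂ X₃ X₄) (e j) (e j)
          = (((n:ℝ)-2)*(ρ^2/2) + (ρ^2*(n:ℝ)/2 + ρ*ψ w)) * (ε j * h (e j) (e j))
            + (((n:ℝ)-2)*ρ) * (ε j * (ψ (e j) * h w (e j))) := by
        intro j _
        rw [ric_eq]; ring
      rw [Finset.sum_congr rfl h8, Finset.sum_add_distrib, ← Finset.mul_sum, ← Finset.mul_sum,
        aux_sum_eps h e ε he hε, hm₁]
      ring
    intro X₁ X₂ X₃ X₄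
    have ric_fun : ricci ε ⇑e (fun X₁ X₂ X₃ X₄ => (1/2 : ℝ) * KN
        (fun X Y => h X (𝒮 Y)) (fun X Y => h X (𝒮 Y)) X₁ X₂ X₃ X₄)
        = fun X Y => ((n:ℝ) - 2) * (ρ^2/2 * h X Y + ρ*(ψ X * h w Y))
          + (ρ^2*(n:ℝ)/2 + ρ * ψ w) * h X Y :=
      funext fun X => funext fun Y => ric_eq X Y
    rw [weyl, ric_fun, scal_eq]
    simp only [KN]
    rw [hA X₁ X₄, hA X₂ X₃, hA X₁ X₃, hA X₂ X₄]
    field_simp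
    ring_nf

end OVAff
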